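/- Let (x, z, θ) be a solution on an interval of the generating-curve system with θ(0) = π/2. Then for all s in the domain (with −s also in the domain), x(s) = x(−s), z(s) + z(−s) = 2 z(0), and θ(s) + θ(−s) = π. In particular the graph of the generating curve is symmetric about the horizontal line z = z(0). -/

import Mathlib

open Real Set

private lemma abs_sin_sub_sin (u v : ℝ) : |Real.sin u - Real.sin v| ≤ |u - v| := by
  rw [Real.sin_sub_sin]
  calc |2 * Real.sin ((u - v) / 2) * Real.cos ((u + v) / 2)|
      = 2 * |Real.sin ((u - v) / 2)| * |Real.cos ((u + v) / 2)| := by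
        rw [abs_mul, abs_mul]; norm_num
    _ ≤ 2 * |(u - v) / 2| * 1 := by
        have h1 := Real.abs_sin_le_abs (x := (u - v) / 2)
        have h2 := Real.abs_cos_le_one ((u + v) / 2)
        have : (0:ℝ) ≤ |Real.sin ((u - v) / 2)| := abs_nonneg _
        nlinarith [abs_nonneg ((u-v)/2)]
    _ = |u - v| := by rw [abs_div, abs_two]; ring

private lemma abs_cos_sub_cos (u v : ℝ) : |Real.cos u - Real.cos v| ≤ |u - v| := by
  rw [Real.cos_sub_cos]
  calc |(-2) * Real.sin ((u + v) / 2) * Real.sin ((u - v) / 2)|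
      = 2 * |Real.sin ((u + v) / 2)| * |Real.sin ((u - v) / 2)| := by
        rw [abs_mul, abs_mul]; norm_num
    _ ≤ 2 * 1 * |(u - v) / 2| := by
        have h1 := Real.abs_sin_le_abs (x := (u - v) / 2)
        have h2 := Real.abs_sin_le_one ((u + v) / 2)
        nlinarith [abs_nonneg (Real.sin ((u - v) / 2)), abs_nonneg ((u-v)/2)]
    _ = |u - v| := by rw [abs_div, abs_two]; ring

private lemma second_comp_est (a m : ℝ) (hm : 0 < m) (p q : ℝ × ℝ)
    (hp : m ≤ p.1) (hq : m ≤ q.1) :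
    |a * Real.sin p.2 / p.1 - a * Real.sin q.2 / q.1| ≤
      (|a| / m) * |p.2 - q.2| + (|a| / m ^ 2) * |p.1 - q.1| := by
  have hp0 : (0:ℝ) < p.1 := lt_of_lt_of_le hm hp
  have hq0 : (0:ℝ) < q.1 := lt_of_lt_of_le hm hq
  have key : a * Real.sin p.2 / p.1 - a * Real.sin q.2 / q.1 =
      a * (Real.sin p.2 - Real.sin q.2) / p.1 +
      a * Real.sin q.2 * (q.1 - p.1) / (p.1 * q.1) := by
    field_simp; ring
  rw [key]
  refine le_trans (abs_add_le _ _) ?_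
  have h1 : |a * (Real.sin p.2 - Real.sin q.2) / p.1| ≤ (|a| / m) * |p.2 - q.2| := by
    rw [abs_div, abs_mul, abs_of_pos hp0, div_mul_eq_mul_div]
    have hs := abs_sin_sub_sin p.2 q.2
    exact div_le_div₀ (by positivity)
      (mul_le_mul_of_nonneg_left hs (abs_nonneg a)) hm hp
  have h2 : |a * Real.sin q.2 * (q.1 - p.1) / (p.1 * q.1)| ≤ (|a| / m ^ 2) * |p.1 - q.1| := by
    rw [abs_div, abs_mul, abs_mul, abs_of_pos (mul_pos hp0 hq0), div_mul_eq_mul_div]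
    apply div_le_div₀ (by positivity) ?_ (by positivity) (by nlinarith)
    rw [abs_sub_comm q.1 p.1]
    have hs1 : |Real.sin q.2| ≤ 1 := Real.abs_sin_le_one _
    calc |a| * |Real.sin q.2| * |p.1 - q.1| ≤ |a| * 1 * |p.1 - q.1| := by gcongr
      _ = |a| * |p.1 - q.1| := by ring
  linarith

/-- zero derivative on a symmetric open interval implies constant -/
private lemma const_of_deriv_zero {f : ℝ → ℝ} {ε : ℝ}
    (hf : ∀ s ∈ Ioo (-ε) ε, HasDerivAt f 0 s) (h0 : (0:ℝ) ∈ Ioo (-ε) ε) :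
    ∀ s ∈ Ioo (-ε) ε, f s = f 0 := by
  intro s hs
  rcases le_or_gt 0 s with h | h
  · have hsub : Icc (0:ℝ) s ⊆ Ioo (-ε) ε := fun t ht =>
      ⟨lt_of_lt_of_le h0.1 ht.1, lt_of_le_of_lt ht.2 hs.2⟩
    have := constant_of_has_deriv_right_zero
      (f := f) (a := 0) (b := s)
      (fun t ht => (hf t (hsub ht)).continuousAt.continuousWithinAt)
      (fun t ht => (hf t (hsub (Ico_subset_Icc_self ht))).hasDerivWithinAt)
    exact this s ⟨h, le_rfl⟩
  · have hsub : Icc s (0:ℝ) ⊆ Ioo (-ε) ε := fun t ht =>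
      ⟨lt_of_lt_of_le hs.1 ht.1, lt_of_le_of_lt ht.2 h0.2⟩
    have := constant_of_has_deriv_right_zero
      (f := f) (a := s) (b := 0)
      (fun t ht => (hf t (hsub ht)).continuousAt.continuousWithinAt)
      (fun t ht => (hf t (hsub (Ico_subset_Icc_self ht))).hasDerivWithinAt)
    exact (this 0 ⟨le_of_lt h, le_rfl⟩).symm

/-- if the generating curve is vertical at s = 0 (θ(0) = π/2), the
solution is symmetric about the horizontal line z = z(0). -/
theorem horizontal_symmetry (a b ε : ℝ) (hε : 0 < ε) (x z θ : ℝ → ℝ)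
    (hx_pos : ∀ s ∈ Ioo (-ε) ε, 0 < x s)
    (hx : ∀ s ∈ Ioo (-ε) ε, HasDerivAt x (Real.cos (θ s)) s)
    (hz : ∀ s ∈ Ioo (-ε) ε, HasDerivAt z (Real.sin (θ s)) s)
    (hθ : ∀ s ∈ Ioo (-ε) ε, HasDerivAt θ (a * Real.sin (θ s) / x s + b) s)
    (hθ0 : θ 0 = π / 2) :
    ∀ s ∈ Ioo (-ε) ε,
      x s = x (-s) ∧ z s + z (-s) = 2 * z 0 ∧ θ s + θ (-s) = π := by
  have h0mem : (0:ℝ) ∈ Ioo (-ε) ε := ⟨neg_lt_zero.mpr hε, hε⟩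
  -- main symmetry claim for x and θ
  have key : ∀ s ∈ Ioo (-ε) ε, x s = x (-s) ∧ θ s + θ (-s) = π := by
    intro s₀ hs₀
    -- choose a compact subinterval
    set c : ℝ := (|s₀| + ε) / 2 with hc
    have habs : |s₀| < ε := abs_lt.mpr ⟨hs₀.1, hs₀.2⟩
    have hcpos : 0 < c := by positivity
    have hclt : c < ε := by rw [hc]; linarith
    have hs₀c : |s₀| < c := by rw [hc]; linarith
    have hsubI : Icc (-c) c ⊆ Ioo (-ε) ε := fun t ht =>
      ⟨lt_of_lt_of_le (neg_lt_neg hclt) ht.1, lt_of_le_of_lt ht.2 hclt⟩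
    have hsubO : Ioo (-c) c ⊆ Ioo (-ε) ε := fun t ht => hsubI (Ioo_subset_Icc_self ht)
    -- positive lower bound for x on the compact subinterval
    have hxcont : ContinuousOn x (Icc (-c) c) := fun t ht =>
      (hx t (hsubI ht)).continuousAt.continuousWithinAt
    obtain ⟨tm, htm, hmin⟩ := isCompact_Icc.exists_isMinOn
      (nonempty_Icc.mpr (by linarith)) hxcont
    set m : ℝ := x tm with hm
    have hmpos : 0 < m := hx_pos tm (hsubI htm)
    have hxlb : ∀ t ∈ Icc (-c) c, m ≤ x t := fun t ht => hmin ht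
    -- the vector field and invariant set
    set F : ℝ × ℝ → ℝ × ℝ :=
      fun p => (Real.cos p.2, a * Real.sin p.2 / p.1 + b) with hF
    set S : Set (ℝ × ℝ) := {p : ℝ × ℝ | m ≤ p.1} with hS
    set K : NNReal := (1 + |a| / m + |a| / m ^ 2).toNNReal with hK
    have hKval : (K : ℝ) = 1 + |a| / m + |a| / m ^ 2 := by
      rw [hK, Real.coe_toNNReal]
      positivity
    have hlip : LipschitzOnWith K F S := by
      rw [lipschitzOnWith_iff_dist_le_mul]
      intro p hp q hq
      rw [Prod.dist_eq, hKval]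
      have hd1 : dist p.1 q.1 ≤ dist p q := by rw [Prod.dist_eq]; exact le_max_left _ _
      have hd2 : dist p.2 q.2 ≤ dist p q := by rw [Prod.dist_eq]; exact le_max_right _ _
      have hdnn : (0:ℝ) ≤ dist p q := dist_nonneg
      apply max_le
      · calc dist (F p).1 (F q).1 = |Real.cos p.2 - Real.cos q.2| := by
              simp [hF, Real.dist_eq]
          _ ≤ |p.2 - q.2| := abs_cos_sub_cos _ _
          _ = dist p.2 q.2 := (Real.dist_eq _ _).symm
          _ ≤ dist p q := hd2
          _ ≤ (1 + |a| / m + |a| / m ^ 2) * dist p q := by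
              have h1 : (0:ℝ) ≤ |a| / m := by positivity
              have h2 : (0:ℝ) ≤ |a| / m ^ 2 := by positivity
              nlinarith
      · have hest := second_comp_est a m hmpos p q hp hq
        calc dist (F p).2 (F q).2
            = |a * Real.sin p.2 / p.1 - a * Real.sin q.2 / q.1| := by
              simp only [hF, Real.dist_eq]; ring_nf
          _ ≤ (|a| / m) * |p.2 - q.2| + (|a| / m ^ 2) * |p.1 - q.1| := hest
          _ = (|a| / m) * dist p.2 q.2 + (|a| / m ^ 2) * dist p.1 q.1 := by
              rw [Real.dist_eq, Real.dist_eq]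
          _ ≤ (|a| / m) * dist p q + (|a| / m ^ 2) * dist p q := by
              have h1 : (0:ℝ) ≤ |a| / m := by positivity
              have h2 : (0:ℝ) ≤ |a| / m ^ 2 := by positivity
              have := mul_le_mul_of_nonneg_left hd2 h1
              have := mul_le_mul_of_nonneg_left hd1 h2
              linarith
          _ ≤ (1 + |a| / m + |a| / m ^ 2) * dist p q := by nlinarith
      -- use the ODE uniqueness theorem
    set f : ℝ → ℝ × ℝ := fun t => (x t, θ t) with hf
    set g : ℝ → ℝ × ℝ := fun t => (x (-t), π - θ (-t)) with hg
    have heq : EqOn f g (Ioo (-c) c) := by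
      apply ODE_solution_unique_of_mem_Ioo (v := fun _ => F) (s := fun _ => S)
        (K := K) (t₀ := 0) (fun _ _ => hlip)
        (mem_Ioo.mpr ⟨neg_lt_zero.mpr hcpos, hcpos⟩)
      · intro t ht
        constructor
        · have h1 := hx t (hsubO ht)
          have h2 := hθ t (hsubO ht)
          exact h1.prodMk h2
        · exact hxlb t (Ioo_subset_Icc_self ht)
      · intro t ht
        have hntI : -t ∈ Ioo (-c) c := by
          constructor <;> [exact neg_lt_neg ht.2; exact neg_lt.mp ht.1]
        have hnt := hsubO hntI
        constructor
        · have h1 : HasDerivAt (fun t => x (-t)) (Real.cos (θ (-t)) * (-1)) t :=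
            (hx (-t) hnt).comp t (hasDerivAt_neg t)
          have h2 : HasDerivAt (fun t => π - θ (-t))
              (-((a * Real.sin (θ (-t)) / x (-t) + b) * (-1))) t :=
            (((hθ (-t) hnt).comp t (hasDerivAt_neg t))).const_sub π
          have hd := h1.prodMk h2
          refine hd.congr_deriv (Eq.symm ?_)
          simp only [hg, hF]
          rw [Real.cos_pi_sub, Real.sin_pi_sub]
          ring_nf
        · show m ≤ x (-t)
          exact hxlb (-t) (Ioo_subset_Icc_self hntI)
      · show f 0 = g 0
        simp [hf, hg, hθ0]
        ring
    have hs₀mem : s₀ ∈ Ioo (-c) c := abs_lt.mp hs₀c |> fun h => ⟨h.1, h.2⟩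
    have := heq hs₀mem
    have h1 : x s₀ = x (-s₀) := congrArg Prod.fst this
    have h2 : θ s₀ = π - θ (-s₀) := congrArg Prod.snd this
    exact ⟨h1, by linarith⟩
  -- now the z part
  have hzkey : ∀ s ∈ Ioo (-ε) ε, z s + z (-s) = 2 * z 0 := by
    have hw : ∀ s ∈ Ioo (-ε) ε, HasDerivAt (fun t => z t + z (-t)) 0 s := by
      intro s hs
      have hns : -s ∈ Ioo (-ε) ε := ⟨neg_lt_neg hs.2, neg_lt.mp hs.1⟩
      have h1 := hz s hs
      have h2 : HasDerivAt (fun t => z (-t)) (Real.sin (θ (-s)) * (-1)) s :=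
        (hz (-s) hns).comp s (hasDerivAt_neg s)
      have hθs : θ (-s) = π - θ s := by
        have := (key s hs).2; linarith
      have := h1.add h2
      refine this.congr_deriv (Eq.symm ?_)
      rw [hθs, Real.sin_pi_sub]
      ring
    intro s hs
    have h := const_of_deriv_zero hw h0mem s hs
    simp only [neg_zero] at h
    linarith
  intro s hs
  exact ⟨(key s hs).1, hzkey s hs, (key s hs).2⟩
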